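/- Generalized small-gain theorem with individual gains (signal form): Let β₁, β₂ be of class KL; γ₁ʸ, γ₂ʸ, γ₁ᵘ, γ₂ᵘ of class K; d₁, d₂, s_l ≥ 0; α₁⁰, α₂⁰ of class K and D₁⁰, D₂⁰ ≥ 0; and ρ₁, ρ₂ of class K∞ satisfying (Id + ρ₂)(γ₂ʸ((Id + ρ₁)(γ₁ʸ(s)))) ≤ s and (Id + ρ₁)(γ₁ʸ((Id + ρ₂)(γ₂ʸ(s)))) ≤ s for all s ≥ s_l. Then for every pair (ρ₃, r₃¹) of class K∞ functions there exist class KL functions β₁′, β₂′, a class K function r₃², and constants d₁′, d₂′ ≥ 0 (equal to zero when s_l = d₁ = d₂ = D₁⁰ = D₂⁰ = 0) with the following property. Whenever x₁, x₂, y₁, y₂ : ℝ≥0 → ℝ≥0 are functions bounded on compact intervals and X₁, X₂, U₁, U₂ ≥ 0 are constants such that for all 0 ≤ t₀ ≤ t: y₁(t) ≤ β₁(x₁(t₀), t − t₀) + γ₁ʸ(sup_{s ∈ [t₀,t]} y₂(s)) + γ₁ᵘ(U₁) + d₁, y₂(t) ≤ β₂(x₂(t₀), t − t₀) + γ₂ʸ(sup_{s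 ∈ [t₀,t]} y₁(s)) + γ₂ᵘ(U₂) + d₂, x₁(t) ≤ α₁⁰(X₁ + sup_{s ∈ [0,t]}(U₁ + y₁(s) + y₂(s))) + D₁⁰, x₂(t) ≤ α₂⁰(X₂ + sup_{s ∈ [0,t]}(U₂ + y₁(s) + y₂(s))) + D₂⁰, and x₁(0) ≤ X₁, x₂(0) ≤ X₂; then for all t ≥ 0: y₁(t) ≤ β₁′(X₁ + X₂, t) + (r₁ + r₃¹)(U₁ + U₂) + d₁′ and y₂(t) ≤ β₂′(X₁ + X₂, t) + (r₂ + r₃²)(U₁ + U₂) + d₂′, where r₁(s) = (Id + ρ₁⁻¹)((Id + ρ₃)²(γ₁ᵘ(s) + γ₁ʸ((Id + ρ₂⁻¹)((Id + ρ₃)²(γ₂ᵘ(s)))))) and r₂(s) = (Id + ρ₂⁻¹)((Id + ρ₃)²(γ₂ᵘ(s) + γ₂ʸ((Id + ρ₁⁻¹)((Id + ρ₃)²(γ₁ᵘ(s)))))). -/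

import Mathlib

open scoped NNReal

/-- A function `γ : ℝ≥0 → ℝ≥0` is of class K if it is continuous, strictly
increasing, and `γ 0 = 0`. -/
def ClassK (γ : ℝ≥0 → ℝ≥0) : Prop := Continuous γ ∧ StrictMono γ ∧ γ 0 = 0

/-- A function `ρ : ℝ≥0 → ℝ≥0` is of class K∞ if it is of class K and unbounded. -/
def ClassKInf (ρ : ℝ≥0 → ℝ≥0) : Prop :=
  ClassK ρ ∧ Filter.Tendsto ρ Filter.atTop Filter.atTop

/-- A function `β : ℝ≥0 × ℝ≥0 → ℝ≥0` is of class KL if `β (·, t)` is of class K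
for each `t`, and `β (s, ·)` is non-increasing and tends to `0` at `∞`. -/
def ClassKL (β : ℝ≥0 → ℝ≥0 → ℝ≥0) : Prop :=
  (∀ t : ℝ≥0, ClassK (fun s => β s t)) ∧
    (∀ s : ℝ≥0, Antitone (fun t => β s t) ∧
      Filter.Tendsto (fun t => β s t) Filter.atTop (nhds 0))

/-- `Ip ρ` is the pointwise sum `Id + ρ`. -/
def Ip (ρ : ℝ≥0 → ℝ≥0) : ℝ≥0 → ℝ≥0 := fun s => s + ρ s

namespace SmallGainAux

open Filter Set Function

lemma ClassK.mono {γ : ℝ≥0 → ℝ≥0} (h : ClassK γ) : Monotone γ := h.2.1.monotone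

lemma inv_strictMono {σ σinv : ℝ≥0 → ℝ≥0} (hσ : StrictMono σ)
    (hr : Function.RightInverse σinv σ) : StrictMono σinv :=
  fun a b hab => hσ.lt_iff_lt.1 (by rw [hr a, hr b]; exact hab)

lemma inv_zero {σ σinv : ℝ≥0 → ℝ≥0} (hσ : StrictMono σ) (h0 : σ 0 = 0)
    (hr : Function.RightInverse σinv σ) : σinv 0 = 0 :=
  hσ.injective (by rw [hr 0, h0])

lemma inv_continuous {σ σinv : ℝ≥0 → ℝ≥0} (hσ : StrictMono σ)
    (hl : Function.LeftInverse σinv σ) (hr : Function.RightInverse σinv σ) :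
    Continuous σinv := by
  have hsurj : Function.Surjective σ := hr.surjective
  let e := StrictMono.orderIsoOfSurjective σ hσ hsurj
  have he : σinv = ⇑e.symm := by
    funext x
    apply hσ.injective
    have h1 : σ (e.symm x) = x := StrictMono.orderIsoOfSurjective_self_symm_apply σ hσ hsurj x
    rw [hr x, h1]
  rw [he]
  exact OrderIso.continuous _

lemma classKInf_surjective {ρ : ℝ≥0 → ℝ≥0} (h : ClassKInf ρ) : Function.Surjective ρ := by
  intro y
  obtain ⟨b, hb⟩ := (h.2.eventually_ge_atTop y).exists
  have hy : y ∈ Set.Icc (ρ 0) (ρ b) := by rw [h.1.2.2]; exact ⟨(zero_le : 0 ≤ y), hb⟩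
  obtain ⟨x, _, hx⟩ := intermediate_value_Icc ((zero_le : 0 ≤ b)) h.1.1.continuousOn hy
  exact ⟨x, hx⟩

lemma le_Ip (ρ : ℝ≥0 → ℝ≥0) (a : ℝ≥0) : a ≤ Ip ρ a := le_self_add

lemma Ip_mono {ρ : ℝ≥0 → ℝ≥0} (h : Monotone ρ) : Monotone (Ip ρ) :=
  fun _ _ hab => add_le_add hab (h hab)

lemma Ip_strictMono {ρ : ℝ≥0 → ℝ≥0} (h : StrictMono ρ) : StrictMono (Ip ρ) :=
  fun _ _ hab => add_lt_add hab (h hab)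

lemma Ip_zero {ρ : ℝ≥0 → ℝ≥0} (h : ρ 0 = 0) : Ip ρ 0 = 0 := by simp [Ip, h]

lemma Ip_continuous {ρ : ℝ≥0 → ℝ≥0} (h : Continuous ρ) : Continuous (Ip ρ) :=
  continuous_id.add h

lemma split {σ σinv : ℝ≥0 → ℝ≥0} (hσ : StrictMono σ)
    (hr : Function.RightInverse σinv σ) (a b : ℝ≥0) :
    a + b ≤ max (Ip σ a) (Ip σinv b) := by
  rcases le_total b (σ a) with h | h
  · exact le_max_of_le_left (add_le_add_right h a)
  · refine le_max_of_le_right ?_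
    have ha : a ≤ σinv b := by
      have h2 := (inv_strictMono hσ hr).monotone h
      have h3 : σinv (σ a) = a := hσ.injective (hr (σ a))
      rwa [h3] at h2
    exact add_le_add_left ha b |>.trans_eq (by simp [Ip, add_comm])

lemma max_le_add (a b : ℝ≥0) : max a b ≤ a + b := max_le le_self_add le_add_self


def Valid (β₁ β₂ : ℝ≥0 → ℝ≥0 → ℝ≥0) (γ₁y γ₂y γ₁u γ₂u α₁0 α₂0 : ℝ≥0 → ℝ≥0)
    (d₁ d₂ D₁0 D₂0 : ℝ≥0) (x₁ x₂ y₁ y₂ : ℝ≥0 → ℝ≥0) (X₁ X₂ U₁ U₂ : ℝ≥0) : Prop :=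
  (∀ t : ℝ≥0, BddAbove (x₁ '' Set.Icc 0 t) ∧ BddAbove (x₂ '' Set.Icc 0 t) ∧
    BddAbove (y₁ '' Set.Icc 0 t) ∧ BddAbove (y₂ '' Set.Icc 0 t)) ∧
  (∀ t₀ t : ℝ≥0, t₀ ≤ t →
    y₁ t ≤ β₁ (x₁ t₀) (t - t₀) + γ₁y (sSup (y₂ '' Set.Icc t₀ t)) + γ₁u U₁ + d₁) ∧
  (∀ t₀ t : ℝ≥0, t₀ ≤ t →
    y₂ t ≤ β₂ (x₂ t₀) (t - t₀) + γ₂y (sSup (y₁ '' Set.Icc t₀ t)) + γ₂u U₂ + d₂) ∧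
  (∀ t : ℝ≥0, x₁ t ≤ α₁0 (X₁ + sSup ((fun s => U₁ + y₁ s + y₂ s) '' Set.Icc 0 t)) + D₁0) ∧
  (∀ t : ℝ≥0, x₂ t ≤ α₂0 (X₂ + sSup ((fun s => U₂ + y₁ s + y₂ s) '' Set.Icc 0 t)) + D₂0) ∧
  x₁ 0 ≤ X₁ ∧ x₂ 0 ≤ X₂

lemma Valid.symm {β₁ β₂ γ₁y γ₂y γ₁u γ₂u α₁0 α₂0 d₁ d₂ D₁0 D₂0 x₁ x₂ y₁ y₂ X₁ X₂ U₁ U₂}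
    (h : Valid β₁ β₂ γ₁y γ₂y γ₁u γ₂u α₁0 α₂0 d₁ d₂ D₁0 D₂0 x₁ x₂ y₁ y₂ X₁ X₂ U₁ U₂) :
    Valid β₂ β₁ γ₂y γ₁y γ₂u γ₁u α₂0 α₁0 d₂ d₁ D₂0 D₁0 x₂ x₁ y₂ y₁ X₂ X₁ U₂ U₁ := by
  obtain ⟨hB, h1, h2, hs1, hs2, hi1, hi2⟩ := h
  have e1 : (fun s => U₂ + y₂ s + y₁ s) = (fun s => U₂ + y₁ s + y₂ s) :=
    funext fun s => add_right_comm _ _ _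
  have e2 : (fun s => U₁ + y₂ s + y₁ s) = (fun s => U₁ + y₁ s + y₂ s) :=
    funext fun s => add_right_comm _ _ _
  exact ⟨fun t => ⟨(hB t).2.1, (hB t).1, (hB t).2.2.2, (hB t).2.2.1⟩, h2, h1,
    fun t => by rw [e1]; exact hs2 t, fun t => by rw [e2]; exact hs1 t, hi2, hi1⟩

lemma valid_zero (β₁ β₂ : ℝ≥0 → ℝ≥0 → ℝ≥0) (γ₁y γ₂y γ₁u γ₂u α₁0 α₂0 : ℝ≥0 → ℝ≥0)
    (d₁ d₂ D₁0 D₂0 : ℝ≥0) :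
    Valid β₁ β₂ γ₁y γ₂y γ₁u γ₂u α₁0 α₂0 d₁ d₂ D₁0 D₂0
      (fun _ => 0) (fun _ => 0) (fun _ => 0) (fun _ => 0) 0 0 0 0 := by
  refine ⟨fun t => ?_, fun _ _ _ => zero_le, fun _ _ _ => zero_le,
    fun t => ?_, fun t => ?_, le_rfl, le_rfl⟩
  · refine ⟨⟨0, ?_⟩, ⟨0, ?_⟩, ⟨0, ?_⟩, ⟨0, ?_⟩⟩ <;>
      · rintro v ⟨τ, _, rfl⟩; exact le_rfl
  · exact zero_le
  · exact zero_le

lemma sg_fixed {γ₁y γ₂y ρ₁ ρ₂ ρ₁inv ρ₂inv : ℝ≥0 → ℝ≥0} {s_l : ℝ≥0}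
    (hγ₁y : Monotone γ₁y)
    (hρ₂s : StrictMono ρ₂) (hρ₂r : Function.RightInverse ρ₂inv ρ₂)
    (hρ₁s : StrictMono ρ₁)
    (hρ₁l : Function.LeftInverse ρ₁inv ρ₁) (hρ₁r : Function.RightInverse ρ₁inv ρ₁)
    (hsg₂ : ∀ s : ℝ≥0, s_l ≤ s → Ip ρ₁ (γ₁y (Ip ρ₂ (γ₂y s))) ≤ s)
    {S₁ S₂ C₁ C₂ : ℝ≥0} (h1 : S₁ ≤ C₁ + γ₁y S₂) (h2 : S₂ ≤ C₂ + γ₂y S₁) :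
    S₁ ≤ max s_l (max (Ip ρ₁inv C₁) (C₁ + γ₁y (Ip ρ₂inv C₂))) := by
  rcases le_total S₁ s_l with hsl | hsl
  · exact le_max_of_le_left hsl
  refine le_max_of_le_right ?_
  have hS₂ : S₂ ≤ max (Ip ρ₂ (γ₂y S₁)) (Ip ρ₂inv C₂) := by
    calc S₂ ≤ C₂ + γ₂y S₁ := h2
      _ = γ₂y S₁ + C₂ := add_comm _ _
      _ ≤ max (Ip ρ₂ (γ₂y S₁)) (Ip ρ₂inv C₂) := split hρ₂s hρ₂r _ _
  have h3 : S₁ ≤ max (C₁ + γ₁y (Ip ρ₂ (γ₂y S₁))) (C₁ + γ₁y (Ip ρ₂inv C₂)) := by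
    calc S₁ ≤ C₁ + γ₁y S₂ := h1
      _ ≤ C₁ + γ₁y (max (Ip ρ₂ (γ₂y S₁)) (Ip ρ₂inv C₂)) := by gcongr; exact hγ₁y hS₂
      _ = max (C₁ + γ₁y (Ip ρ₂ (γ₂y S₁))) (C₁ + γ₁y (Ip ρ₂inv C₂)) := by
          rw [hγ₁y.map_max, max_add_add_left]
  rcases le_max_iff.1 h3 with hP | hQ
  · refine le_max_of_le_left ?_
    set v := γ₁y (Ip ρ₂ (γ₂y S₁)) with hv
    have hIp : v + ρ₁ v ≤ S₁ := hsg₂ S₁ hsl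
    have hρv : ρ₁ v ≤ C₁ := by
      have : v + ρ₁ v ≤ C₁ + v := hIp.trans hP
      rw [add_comm C₁ v] at this
      exact le_of_add_le_add_left this
    have hvle : v ≤ ρ₁inv C₁ := by
      have := (inv_strictMono hρ₁s hρ₁r).monotone hρv
      rwa [hρ₁l v] at this
    calc S₁ ≤ C₁ + v := hP
      _ ≤ C₁ + ρ₁inv C₁ := by gcongr
      _ = Ip ρ₁inv C₁ := rfl
  · exact le_max_of_le_right hQ


lemma inv_one_add_tendsto : Filter.Tendsto (fun t : ℝ≥0 => (1+t)⁻¹) Filter.atTop (nhds 0) := by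
  rw [tendsto_order]
  refine ⟨fun a ha => absurd ha (by simp), fun a ha => ?_⟩
  filter_upwards [Filter.eventually_ge_atTop a⁻¹] with t ht
  rw [inv_lt_iff_one_lt_mul₀ (by positivity)]
  calc (1:ℝ≥0) = a⁻¹ * a := by rw [inv_mul_cancel₀ ha.ne']
    _ ≤ t * a := by gcongr
    _ < (1 + t) * a := by exact mul_lt_mul_of_pos_right (lt_one_add t) ha
    _ = a * (1 + t) := mul_comm _ _

lemma mul_tsub' (a b c : ℝ≥0) : a * (b - c) = a * b - a * c := by
  rcases le_total c b with h | h
  · have hb : b = c + (b - c) := (add_tsub_cancel_of_le h).symm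
    nth_rewrite 2 [hb]
    rw [mul_add, add_tsub_cancel_left]
  · rw [tsub_eq_zero_of_le h, mul_zero, tsub_eq_zero_of_le (by gcongr)]

lemma kl_major (Φ : ℝ≥0 → ℝ≥0 → ℝ≥0) (G : ℝ≥0 → ℝ≥0) (hG : ClassK G)
    (hmono : ∀ t, Monotone (fun s => Φ s t)) (hanti : ∀ s, Antitone (Φ s))
    (hle : ∀ s t, Φ s t ≤ G s)
    (hdecay : ∀ s, Filter.Tendsto (Φ s) Filter.atTop (nhds 0)) :
    ∃ β : ℝ≥0 → ℝ≥0 → ℝ≥0, ClassKL β ∧ ∀ s t, Φ s t ≤ β s t := by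
  classical
  set β₀ : ℝ≥0 → ℝ≥0 → ℝ≥0 := fun σ t =>
    Φ 2 t + ∑' k : ℕ, min 1 (σ - (k : ℝ≥0)) * (Φ ((k : ℝ≥0) + 3) t - Φ ((k : ℝ≥0) + 2) t)
    with hβ₀def
  have hfin : ∀ (σ t : ℝ≥0) (K : ℕ), σ < K →
      β₀ σ t = Φ 2 t + ∑ k ∈ Finset.range K,
        min 1 (σ - (k : ℝ≥0)) * (Φ ((k : ℝ≥0) + 3) t - Φ ((k : ℝ≥0) + 2) t) := by
    intro σ t K hK
    rw [hβ₀def]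
    refine congrArg (fun z : ℝ≥0 => Φ 2 t + z) (tsum_eq_sum ?_)
    intro k hk
    have hKk : (K : ℕ) ≤ k := by simpa using hk
    have hσk : σ ≤ (k : ℝ≥0) := le_trans hK.le (by exact_mod_cast hKk)
    rw [tsub_eq_zero_of_le hσk]
    simp
  have htel : ∀ (t : ℝ≥0) (m : ℕ), Φ 2 t +
      ∑ k ∈ Finset.range m, (Φ ((k : ℝ≥0) + 3) t - Φ ((k : ℝ≥0) + 2) t)
      = Φ ((m : ℝ≥0) + 2) t := by
    intro t m
    induction m with
    | zero => norm_num
    | succ n ih =>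
      rw [Finset.sum_range_succ, ← add_assoc, ih]
      have hAB : Φ ((n : ℝ≥0) + 2) t ≤ Φ ((n : ℝ≥0) + 3) t := hmono t (by gcongr <;> norm_num)
      rw [add_tsub_cancel_of_le hAB]
      have hc : ((n + 1 : ℕ) : ℝ≥0) + 2 = (n : ℝ≥0) + 3 := by push_cast; ring
      rw [hc]
  have hval : ∀ (σ t : ℝ≥0), β₀ σ t =
      Φ ((⌊σ⌋₊ : ℝ≥0) + 2) t + (σ - (⌊σ⌋₊ : ℝ≥0)) *
        (Φ ((⌊σ⌋₊ : ℝ≥0) + 3) t - Φ ((⌊σ⌋₊ : ℝ≥0) + 2) t) := by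
    intro σ t
    set m := ⌊σ⌋₊ with hm
    have hσm : (m : ℝ≥0) ≤ σ := Nat.floor_le ((zero_le : 0 ≤ σ))
    have hσm1 : σ < (m : ℝ≥0) + 1 := Nat.lt_floor_add_one σ
    rw [hfin σ t (m+1) (by push_cast; exact hσm1)]
    rw [Finset.sum_range_succ]
    have hsum_eq : ∑ k ∈ Finset.range m,
        min 1 (σ - (k : ℝ≥0)) * (Φ ((k : ℝ≥0) + 3) t - Φ ((k : ℝ≥0) + 2) t)
        = ∑ k ∈ Finset.range m, (Φ ((k : ℝ≥0) + 3) t - Φ ((k : ℝ≥0) + 2) t) := by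
      refine Finset.sum_congr rfl ?_
      intro k hk
      have hkm : (k : ℕ) < m := Finset.mem_range.1 hk
      have h1 : (1 : ℝ≥0) ≤ σ - (k : ℝ≥0) := by
        have : (k : ℝ≥0) + 1 ≤ σ := by
          calc (k : ℝ≥0) + 1 ≤ (m : ℝ≥0) := by exact_mod_cast hkm
            _ ≤ σ := hσm
        exact le_tsub_of_add_le_left this
      rw [min_eq_left h1, one_mul]
    have hlast : min 1 (σ - (m : ℝ≥0)) = σ - (m : ℝ≥0) := by
      refine min_eq_right ?_
      rw [tsub_le_iff_right]
      rw [add_comm]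
      exact hσm1.le
    rw [hsum_eq, ← add_assoc, htel t m, hlast]
  have hθ_le_one : ∀ σ : ℝ≥0, σ - (⌊σ⌋₊ : ℝ≥0) ≤ 1 := by
    intro σ
    rw [tsub_le_iff_right, add_comm]
    exact (Nat.lt_floor_add_one σ).le
  have hAB : ∀ (σ : ℝ≥0) (t : ℝ≥0),
      Φ ((⌊σ⌋₊ : ℝ≥0) + 2) t ≤ Φ ((⌊σ⌋₊ : ℝ≥0) + 3) t :=
    fun σ t => hmono t (by gcongr <;> norm_num)
  have hΦle : ∀ σ t, Φ σ t ≤ β₀ σ t := by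
    intro σ t
    rw [hval]
    refine le_trans (hmono t ?_) le_self_add
    calc σ ≤ (⌊σ⌋₊ : ℝ≥0) + 1 := (Nat.lt_floor_add_one σ).le
      _ ≤ (⌊σ⌋₊ : ℝ≥0) + 2 := by gcongr <;> norm_num
  have hβ₀le : ∀ σ t, β₀ σ t ≤ Φ ((⌊σ⌋₊ : ℝ≥0) + 3) t := by
    intro σ t
    rw [hval]
    calc Φ ((⌊σ⌋₊ : ℝ≥0) + 2) t + (σ - (⌊σ⌋₊ : ℝ≥0)) *
          (Φ ((⌊σ⌋₊ : ℝ≥0) + 3) t - Φ ((⌊σ⌋₊ : ℝ≥0) + 2) t)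
        ≤ Φ ((⌊σ⌋₊ : ℝ≥0) + 2) t + 1 *
          (Φ ((⌊σ⌋₊ : ℝ≥0) + 3) t - Φ ((⌊σ⌋₊ : ℝ≥0) + 2) t) := by gcongr; exact hθ_le_one σ
      _ = _ := by rw [one_mul, add_tsub_cancel_of_le (hAB σ t)]
  have hconv : ∀ σ t, β₀ σ t =
      (1 - (σ - (⌊σ⌋₊ : ℝ≥0))) * Φ ((⌊σ⌋₊ : ℝ≥0) + 2) t
        + (σ - (⌊σ⌋₊ : ℝ≥0)) * Φ ((⌊σ⌋₊ : ℝ≥0) + 3) t := by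
    intro σ t
    rw [hval]
    set θ := σ - (⌊σ⌋₊ : ℝ≥0)
    set A := Φ ((⌊σ⌋₊ : ℝ≥0) + 2) t
    set B := Φ ((⌊σ⌋₊ : ℝ≥0) + 3) t
    have hab : A ≤ B := hAB σ t
    have hθA : θ * A ≤ θ * B := by gcongr
    have hθA' : θ * A ≤ A := by
      calc θ * A ≤ 1 * A := by gcongr; exact hθ_le_one σ
        _ = A := one_mul A
    calc A + θ * (B - A) = A + (θ * B - θ * A) := by rw [mul_tsub']
      _ = A + θ * B - θ * A := (add_tsub_assoc_of_le hθA A).symm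
      _ = A - θ * A + θ * B := (tsub_add_eq_add_tsub hθA').symm
      _ = (1 - θ) * A + θ * B := by
          have h1A : (1 - θ) * A = A - θ * A := by rw [tsub_mul, one_mul]
          rw [h1A]
  have hβ₀anti : ∀ σ : ℝ≥0, Antitone (fun t => β₀ σ t) := by
    intro σ t t' htt'
    simp only
    rw [hconv, hconv]
    exact add_le_add (mul_le_mul_right (hanti _ htt') _) (mul_le_mul_right (hanti _ htt') _)
  have hβ₀mono : ∀ t : ℝ≥0, Monotone (fun σ => β₀ σ t) := by
    intro t σ σ' hσσ'
    simp only
    have hK : σ' < ((⌊σ'⌋₊ + 1 : ℕ) : ℝ≥0) := by push_cast; exact Nat.lt_floor_add_one σ'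
    rw [hfin σ t (⌊σ'⌋₊ + 1) (lt_of_le_of_lt hσσ' hK), hfin σ' t (⌊σ'⌋₊ + 1) hK]
    gcongr with k hk
  have hβ₀cont : ∀ t : ℝ≥0, Continuous (fun σ => β₀ σ t) := by
    intro t
    rw [continuous_iff_continuousAt]
    intro σ₀
    set K := ⌊σ₀⌋₊ + 1 with hKdef
    have hσ₀K : σ₀ < (K : ℝ≥0) := by rw [hKdef]; push_cast; exact Nat.lt_floor_add_one σ₀
    have hFc : Continuous (fun σ : ℝ≥0 => Φ 2 t + ∑ k ∈ Finset.range K,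
        min 1 (σ - (k : ℝ≥0)) * (Φ ((k : ℝ≥0) + 3) t - Φ ((k : ℝ≥0) + 2) t)) := by
      refine continuous_const.add (continuous_finset_sum _ ?_)
      intro k _
      exact ((continuous_const.min (continuous_id.sub continuous_const)).mul continuous_const)
    refine hFc.continuousAt.congr ?_
    have hmem : Set.Iio ((K : ℕ) : ℝ≥0) ∈ nhds σ₀ := isOpen_Iio.mem_nhds hσ₀K
    filter_upwards [hmem] with σ hσ
    exact (hfin σ t K hσ).symm
  have hβ₀tend : ∀ σ : ℝ≥0, Filter.Tendsto (fun t => β₀ σ t) Filter.atTop (nhds 0) := by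
    intro σ
    refine tendsto_of_tendsto_of_tendsto_of_le_of_le tendsto_const_nhds
      (hdecay ((⌊σ⌋₊ : ℝ≥0) + 3)) (fun t => zero_le) (fun t => hβ₀le σ t)
  refine ⟨fun σ t => min (G σ) (β₀ σ t) + G σ * (1 + t)⁻¹, ⟨?_, ?_⟩, ?_⟩
  · intro t
    refine ⟨?_, ?_, ?_⟩
    · exact (hG.1.min (hβ₀cont t)).add (hG.1.mul continuous_const)
    · intro a b hab
      have h1 : min (G a) (β₀ a t) ≤ min (G b) (β₀ b t) :=
        min_le_min (hG.2.1.monotone hab.le) (hβ₀mono t hab.le)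
      have h2 : G a * (1 + t)⁻¹ < G b * (1 + t)⁻¹ := by
        have hpos : (0 : ℝ≥0) < (1 + t)⁻¹ := by positivity
        exact mul_lt_mul_of_pos_right (hG.2.1 hab) hpos
      exact add_lt_add_of_le_of_lt h1 h2
    · have h0 : G 0 = 0 := hG.2.2
      simp only []
      rw [h0]
      simp
  · intro σ
    constructor
    · intro t t' htt'
      refine add_le_add (min_le_min le_rfl (hβ₀anti σ htt')) ?_
      have hinv : (1 + t')⁻¹ ≤ (1 + t)⁻¹ := by
        gcongr
      exact mul_le_mul_right hinv _
    · have h1 : Filter.Tendsto (fun t : ℝ≥0 => β₀ σ t + G σ * (1 + t)⁻¹)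
          Filter.atTop (nhds 0) := by
        have h2 : Filter.Tendsto (fun t : ℝ≥0 => G σ * (1 + t)⁻¹) Filter.atTop (nhds 0) := by
          have := inv_one_add_tendsto.const_mul (G σ)
          simpa using this
        simpa using (hβ₀tend σ).add h2
      refine tendsto_of_tendsto_of_tendsto_of_le_of_le tendsto_const_nhds h1
        (fun t => zero_le) (fun t => add_le_add (min_le_right _ _) le_rfl)
  · intro s t
    exact le_trans (le_min (hle s t) (hΦle s t)) le_self_add
lemma core
    (β₁ β₂ : ℝ≥0 → ℝ≥0 → ℝ≥0)
    (γ₁y γ₂y γ₁u γ₂u α₁0 α₂0 ρ₁ ρ₂ ρ₁inv ρ₂inv ρ₃ ρ₃inv r₃1 : ℝ≥0 → ℝ≥0)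
    (d₁ d₂ s_l D₁0 D₂0 : ℝ≥0)
    (hβ₁ : ClassKL β₁) (hβ₂ : ClassKL β₂)
    (hγ₁y : ClassK γ₁y) (hγ₂y : ClassK γ₂y)
    (hγ₁u : ClassK γ₁u) (hγ₂u : ClassK γ₂u)
    (hα₁0 : ClassK α₁0) (hα₂0 : ClassK α₂0)
    (hρ₁ : ClassKInf ρ₁) (hρ₂ : ClassKInf ρ₂)
    (hρ₁l : Function.LeftInverse ρ₁inv ρ₁) (hρ₁r : Function.RightInverse ρ₁inv ρ₁)
    (hρ₂l : Function.LeftInverse ρ₂inv ρ₂) (hρ₂r : Function.RightInverse ρ₂inv ρ₂)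
    (hρ₃ : ClassKInf ρ₃)
    (hρ₃l : Function.LeftInverse ρ₃inv ρ₃) (hρ₃r : Function.RightInverse ρ₃inv ρ₃)
    (hr₃1 : ClassKInf r₃1)
    (hsg₁ : ∀ s : ℝ≥0, s_l ≤ s → Ip ρ₂ (γ₂y (Ip ρ₁ (γ₁y s))) ≤ s)
    (hsg₂ : ∀ s : ℝ≥0, s_l ≤ s → Ip ρ₁ (γ₁y (Ip ρ₂ (γ₂y s))) ≤ s) :
    ∃ G₁ : ℝ≥0 → ℝ≥0, ∃ c₁ : ℝ≥0, ClassK G₁ ∧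
      (s_l = 0 → d₁ = 0 → d₂ = 0 → c₁ = 0) ∧
      (∀ x₁ x₂ y₁ y₂ : ℝ≥0 → ℝ≥0, ∀ X₁ X₂ U₁ U₂ : ℝ≥0,
        Valid β₁ β₂ γ₁y γ₂y γ₁u γ₂u α₁0 α₂0 d₁ d₂ D₁0 D₂0 x₁ x₂ y₁ y₂ X₁ X₂ U₁ U₂ →
        ∀ t, y₁ t ≤ G₁ (X₁ + X₂) + Ip ρ₁inv (Ip ρ₃ (Ip ρ₃ (γ₁u (U₁+U₂) +
          γ₁y (Ip ρ₂inv (Ip ρ₃ (Ip ρ₃ (γ₂u (U₁+U₂)))))))) + c₁) ∧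
      (∀ s ε : ℝ≥0, 0 < ε → ∃ T : ℝ≥0, ∀ x₁ x₂ y₁ y₂ : ℝ≥0 → ℝ≥0, ∀ X₁ X₂ U₁ U₂ : ℝ≥0,
        Valid β₁ β₂ γ₁y γ₂y γ₁u γ₂u α₁0 α₂0 d₁ d₂ D₁0 D₂0 x₁ x₂ y₁ y₂ X₁ X₂ U₁ U₂ →
        X₁ + X₂ ≤ s → ∀ t, T ≤ t →
        y₁ t ≤ Ip ρ₁inv (Ip ρ₃ (Ip ρ₃ (γ₁u (U₁+U₂) +
          γ₁y (Ip ρ₂inv (Ip ρ₃ (Ip ρ₃ (γ₂u (U₁+U₂)))))))) + r₃1 (U₁+U₂) + c₁ + ε) := by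
  classical
  obtain ⟨⟨hρ₁c, hρ₁s, hρ₁0⟩, hρ₁t⟩ := hρ₁
  obtain ⟨⟨hρ₂c, hρ₂s, hρ₂0⟩, hρ₂t⟩ := hρ₂
  obtain ⟨⟨hρ₃c, hρ₃s, hρ₃0⟩, hρ₃t⟩ := hρ₃
  have mγ₁y : Monotone γ₁y := hγ₁y.2.1.monotone
  have mγ₂y : Monotone γ₂y := hγ₂y.2.1.monotone
  have mγ₁u : Monotone γ₁u := hγ₁u.2.1.monotone
  have mγ₂u : Monotone γ₂u := hγ₂u.2.1.monotone
  have mα₁0 : Monotone α₁0 := hα₁0.2.1.monotone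
  have mα₂0 : Monotone α₂0 := hα₂0.2.1.monotone
  have mρ₁inv : Monotone ρ₁inv := (inv_strictMono hρ₁s hρ₁r).monotone
  have mρ₂inv : Monotone ρ₂inv := (inv_strictMono hρ₂s hρ₂r).monotone
  have mρ₃inv : Monotone ρ₃inv := (inv_strictMono hρ₃s hρ₃r).monotone
  have mq : Monotone (Ip ρ₃) := Ip_mono hρ₃s.monotone
  have mI1 : Monotone (Ip ρ₁inv) := Ip_mono mρ₁inv
  have mI2 : Monotone (Ip ρ₂inv) := Ip_mono mρ₂inv
  have mI3 : Monotone (Ip ρ₃inv) := Ip_mono mρ₃inv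
  -- key defs
  set W : ℝ≥0 → ℝ≥0 := fun U => γ₁y (Ip ρ₂inv (Ip ρ₃ (Ip ρ₃ (γ₂u U)))) with hW
  set R : ℝ≥0 → ℝ≥0 := fun U => Ip ρ₁inv (Ip ρ₃ (Ip ρ₃ (γ₁u U + W U))) with hR
  set Ga : ℝ≥0 → ℝ≥0 := fun σ => Ip ρ₁inv (Ip ρ₃inv (Ip ρ₃ (β₁ σ 0))) with hGa
  set Gb : ℝ≥0 → ℝ≥0 := fun σ => γ₁y (Ip ρ₂inv (Ip ρ₃inv (Ip ρ₃ (β₂ σ 0)))) with hGb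
  set G₁ : ℝ≥0 → ℝ≥0 := fun σ => Ga σ + β₁ σ 0 + Gb σ with hG₁
  set ca : ℝ≥0 := Ip ρ₁inv (Ip ρ₃inv (Ip ρ₃inv d₁)) with hca
  set cb : ℝ≥0 := γ₁y (Ip ρ₂inv (Ip ρ₃inv (Ip ρ₃inv d₂))) with hcb
  set c₁t : ℝ≥0 := s_l + ca + d₁ + cb with hc₁t
  set E₂ : ℝ≥0 → ℝ≥0 := fun x => γ₁y (Ip ρ₂inv (Ip ρ₃inv (d₂ + x))) with hE₂
  set Fc : ℝ≥0 → ℝ≥0 := fun x =>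
    Ip ρ₃inv (d₁ + x + E₂ x) + Ip ρ₁inv (Ip ρ₃ (Ip ρ₃inv (d₁ + x))) with hFc
  set c₁ : ℝ≥0 := c₁t + Fc 0 with hc₁
  set C1f : ℝ≥0 → ℝ≥0 → ℝ≥0 := fun X U => β₁ X 0 + γ₁u U + d₁ with hC1f
  set C2f : ℝ≥0 → ℝ≥0 → ℝ≥0 := fun X U => β₂ X 0 + γ₂u U + d₂ with hC2f
  set M1f : ℝ≥0 → ℝ≥0 → ℝ≥0 → ℝ≥0 → ℝ≥0 := fun X₁ U₁ X₂ U₂ =>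
    max s_l (max (Ip ρ₁inv (C1f X₁ U₁)) (C1f X₁ U₁ + γ₁y (Ip ρ₂inv (C2f X₂ U₂)))) with hM1f
  set M2f : ℝ≥0 → ℝ≥0 → ℝ≥0 → ℝ≥0 → ℝ≥0 := fun X₁ U₁ X₂ U₂ =>
    max s_l (max (Ip ρ₂inv (C2f X₂ U₂)) (C2f X₂ U₂ + γ₂y (Ip ρ₁inv (C1f X₁ U₁)))) with hM2f
  -- generic gain chains
  have hγR : ∀ U, γ₁u U + W U ≤ R U := by
    intro U
    calc γ₁u U + W U ≤ Ip ρ₃ (γ₁u U + W U) := le_Ip _ _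
      _ ≤ Ip ρ₃ (Ip ρ₃ (γ₁u U + W U)) := le_Ip _ _
      _ ≤ R U := le_Ip _ _
  have hRq : ∀ U x, x ≤ γ₁u U + W U → Ip ρ₁inv (Ip ρ₃ x) ≤ R U := by
    intro U x hx
    refine mI1 ?_
    calc Ip ρ₃ x ≤ Ip ρ₃ (γ₁u U + W U) := mq hx
      _ ≤ Ip ρ₃ (Ip ρ₃ (γ₁u U + W U)) := le_Ip _ _
  -- per-signal sup bound
  have boundY : ∀ x₁ x₂ y₁ y₂ : ℝ≥0 → ℝ≥0, ∀ X₁ X₂ U₁ U₂ : ℝ≥0,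
      Valid β₁ β₂ γ₁y γ₂y γ₁u γ₂u α₁0 α₂0 d₁ d₂ D₁0 D₂0 x₁ x₂ y₁ y₂ X₁ X₂ U₁ U₂ →
      ∀ t, sSup (y₁ '' Set.Icc 0 t) ≤ M1f X₁ U₁ X₂ U₂ ∧
        sSup (y₂ '' Set.Icc 0 t) ≤ M2f X₁ U₁ X₂ U₂ := by
    intro x₁ x₂ y₁ y₂ X₁ X₂ U₁ U₂ hV t
    obtain ⟨hB, h1, h2, _, _, hx10, hx20⟩ := hV
    have hne1 : (y₁ '' Set.Icc 0 t).Nonempty :=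
      ⟨y₁ 0, Set.mem_image_of_mem _ ⟨le_rfl, (zero_le : 0 ≤ t)⟩⟩
    have hne2 : (y₂ '' Set.Icc 0 t).Nonempty :=
      ⟨y₂ 0, Set.mem_image_of_mem _ ⟨le_rfl, (zero_le : 0 ≤ t)⟩⟩
    have hS1 : sSup (y₁ '' Set.Icc 0 t) ≤ C1f X₁ U₁ + γ₁y (sSup (y₂ '' Set.Icc 0 t)) := by
      refine csSup_le hne1 ?_
      rintro v ⟨τ, hτ, rfl⟩
      have hβb : β₁ (x₁ 0) (τ - 0) ≤ β₁ X₁ 0 :=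
        le_trans (ClassK.mono (hβ₁.1 (τ - 0)) hx10) ((hβ₁.2 X₁).1 (zero_le))
      have hsup : sSup (y₂ '' Set.Icc 0 τ) ≤ sSup (y₂ '' Set.Icc 0 t) :=
        csSup_le_csSup (hB t).2.2.2 ⟨y₂ 0, Set.mem_image_of_mem _ ⟨le_rfl, (zero_le : 0 ≤ τ)⟩⟩
          (Set.image_mono (Set.Icc_subset_Icc le_rfl hτ.2))
      calc y₁ τ ≤ β₁ (x₁ 0) (τ - 0) + γ₁y (sSup (y₂ '' Set.Icc 0 τ)) + γ₁u U₁ + d₁ :=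
            h1 0 τ ((zero_le : 0 ≤ τ))
        _ ≤ β₁ X₁ 0 + γ₁y (sSup (y₂ '' Set.Icc 0 t)) + γ₁u U₁ + d₁ :=
            add_le_add (add_le_add (add_le_add hβb (mγ₁y hsup)) le_rfl) le_rfl
        _ = C1f X₁ U₁ + γ₁y (sSup (y₂ '' Set.Icc 0 t)) := by rw [hC1f]; ring
    have hS2 : sSup (y₂ '' Set.Icc 0 t) ≤ C2f X₂ U₂ + γ₂y (sSup (y₁ '' Set.Icc 0 t)) := by
      refine csSup_le hne2 ?_
      rintro v ⟨τ, hτ, rfl⟩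
      have hβb : β₂ (x₂ 0) (τ - 0) ≤ β₂ X₂ 0 :=
        le_trans (ClassK.mono (hβ₂.1 (τ - 0)) hx20) ((hβ₂.2 X₂).1 (zero_le))
      have hsup : sSup (y₁ '' Set.Icc 0 τ) ≤ sSup (y₁ '' Set.Icc 0 t) :=
        csSup_le_csSup (hB t).2.2.1 ⟨y₁ 0, Set.mem_image_of_mem _ ⟨le_rfl, (zero_le : 0 ≤ τ)⟩⟩
          (Set.image_mono (Set.Icc_subset_Icc le_rfl hτ.2))
      calc y₂ τ ≤ β₂ (x₂ 0) (τ - 0) + γ₂y (sSup (y₁ '' Set.Icc 0 τ)) + γ₂u U₂ + d₂ :=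
            h2 0 τ ((zero_le : 0 ≤ τ))
        _ ≤ β₂ X₂ 0 + γ₂y (sSup (y₁ '' Set.Icc 0 t)) + γ₂u U₂ + d₂ :=
            add_le_add (add_le_add (add_le_add hβb (mγ₂y hsup)) le_rfl) le_rfl
        _ = C2f X₂ U₂ + γ₂y (sSup (y₁ '' Set.Icc 0 t)) := by rw [hC2f]; ring
    constructor
    · exact sg_fixed mγ₁y hρ₂s hρ₂r hρ₁s hρ₁l hρ₁r hsg₂ hS1 hS2
    · exact sg_fixed mγ₂y hρ₁s hρ₁r hρ₂s hρ₂l hρ₂r hsg₁ hS2 hS1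
  have boundy : ∀ x₁ x₂ y₁ y₂ : ℝ≥0 → ℝ≥0, ∀ X₁ X₂ U₁ U₂ : ℝ≥0,
      Valid β₁ β₂ γ₁y γ₂y γ₁u γ₂u α₁0 α₂0 d₁ d₂ D₁0 D₂0 x₁ x₂ y₁ y₂ X₁ X₂ U₁ U₂ →
      ∀ t, y₁ t ≤ M1f X₁ U₁ X₂ U₂ ∧ y₂ t ≤ M2f X₁ U₁ X₂ U₂ := by
    intro x₁ x₂ y₁ y₂ X₁ X₂ U₁ U₂ hV t
    have h1 : y₁ t ≤ sSup (y₁ '' Set.Icc 0 t) :=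
      le_csSup (hV.1 t).2.2.1 (Set.mem_image_of_mem _ ⟨(zero_le : 0 ≤ t), le_rfl⟩)
    have h2 : y₂ t ≤ sSup (y₂ '' Set.Icc 0 t) :=
      le_csSup (hV.1 t).2.2.2 (Set.mem_image_of_mem _ ⟨(zero_le : 0 ≤ t), le_rfl⟩)
    exact ⟨h1.trans (boundY _ _ _ _ _ _ _ _ hV t).1, h2.trans (boundY _ _ _ _ _ _ _ _ hV t).2⟩
  -- transient algebra
  have hM1le : ∀ X₁ U₁ X₂ U₂ s U : ℝ≥0, X₁ ≤ s → X₂ ≤ s → U₁ ≤ U → U₂ ≤ U →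
      M1f X₁ U₁ X₂ U₂ ≤ G₁ s + R U + c₁t := by
    intro X₁ U₁ X₂ U₂ s U hX₁ hX₂ hU₁ hU₂
    have hβ₁m : β₁ X₁ 0 ≤ β₁ s 0 := ClassK.mono (hβ₁.1 0) hX₁
    have hβ₂m : β₂ X₂ 0 ≤ β₂ s 0 := ClassK.mono (hβ₂.1 0) hX₂
    have hC₁ : C1f X₁ U₁ ≤ γ₁u U + (β₁ s 0 + d₁) := by
      rw [hC1f]
      calc β₁ X₁ 0 + γ₁u U₁ + d₁ ≤ β₁ s 0 + γ₁u U + d₁ :=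
            add_le_add (add_le_add hβ₁m (mγ₁u hU₁)) le_rfl
        _ = γ₁u U + (β₁ s 0 + d₁) := by ring
    have hC₂ : C2f X₂ U₂ ≤ γ₂u U + (β₂ s 0 + d₂) := by
      rw [hC2f]
      calc β₂ X₂ 0 + γ₂u U₂ + d₂ ≤ β₂ s 0 + γ₂u U + d₂ :=
            add_le_add (add_le_add hβ₂m (mγ₂u hU₂)) le_rfl
        _ = γ₂u U + (β₂ s 0 + d₂) := by ring
    have hsl : s_l ≤ G₁ s + R U + c₁t := by
      rw [← NNReal.coe_le_coe]; push_cast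
      have := (G₁ s).coe_nonneg; have := (R U).coe_nonneg
      have := ca.coe_nonneg; have := d₁.coe_nonneg; have := cb.coe_nonneg
      rw [hc₁t]; push_cast; linarith
    refine max_le hsl (max_le ?_ ?_)
    · -- Ip ρ₁inv C₁ branch
      have h1 : Ip ρ₁inv (C1f X₁ U₁) ≤
          max (Ip ρ₁inv (Ip ρ₃ (γ₁u U))) (Ip ρ₁inv (Ip ρ₃inv (β₁ s 0 + d₁))) := by
        rw [← Monotone.map_max mI1]
        exact mI1 (hC₁.trans (split hρ₃s hρ₃r _ _))
      have h2 : Ip ρ₁inv (Ip ρ₃ (γ₁u U)) ≤ R U := hRq U _ le_self_add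
      have h3 : Ip ρ₁inv (Ip ρ₃inv (β₁ s 0 + d₁)) ≤ max (Ga s) ca := by
        have hs := split hρ₃s hρ₃r (β₁ s 0) d₁
        calc Ip ρ₁inv (Ip ρ₃inv (β₁ s 0 + d₁))
            ≤ Ip ρ₁inv (Ip ρ₃inv (max (Ip ρ₃ (β₁ s 0)) (Ip ρ₃inv d₁))) := mI1 (mI3 hs)
          _ = max (Ip ρ₁inv (Ip ρ₃inv (Ip ρ₃ (β₁ s 0)))) (Ip ρ₁inv (Ip ρ₃inv (Ip ρ₃inv d₁))) := by
              rw [← Monotone.map_max mI1, ← Monotone.map_max mI3]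
          _ = max (Ga s) ca := rfl
      refine h1.trans (max_le (h2.trans ?_) (h3.trans (max_le ?_ ?_)))
      · rw [← NNReal.coe_le_coe]; push_cast
        have := (G₁ s).coe_nonneg; have := c₁t.coe_nonneg; linarith
      · rw [← NNReal.coe_le_coe, hG₁, hc₁t]; push_cast
        have := (β₁ s 0).coe_nonneg; have := (Gb s).coe_nonneg
        have := (R U).coe_nonneg; have := s_l.coe_nonneg; have := ca.coe_nonneg
        have := d₁.coe_nonneg; have := cb.coe_nonneg; linarith
      · rw [← NNReal.coe_le_coe, hG₁, hc₁t]; push_cast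
        have := (Ga s).coe_nonneg; have := (β₁ s 0).coe_nonneg; have := (Gb s).coe_nonneg
        have := (R U).coe_nonneg; have := s_l.coe_nonneg
        have := d₁.coe_nonneg; have := cb.coe_nonneg; linarith
    · -- C₁ + γ₁y (Ip ρ₂inv C₂) branch
      have hin : γ₁y (Ip ρ₂inv (C2f X₂ U₂)) ≤ W U + (Gb s + cb) := by
        have hs := split hρ₃s hρ₃r (γ₂u U) (β₂ s 0 + d₂)
        have h4 : γ₁y (Ip ρ₂inv (C2f X₂ U₂)) ≤
            max (γ₁y (Ip ρ₂inv (Ip ρ₃ (γ₂u U)))) (γ₁y (Ip ρ₂inv (Ip ρ₃inv (β₂ s 0 + d₂)))) := by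
          rw [← Monotone.map_max mγ₁y, ← Monotone.map_max mI2]
          exact mγ₁y (mI2 (hC₂.trans hs))
        have h5 : γ₁y (Ip ρ₂inv (Ip ρ₃ (γ₂u U))) ≤ W U := by
          rw [hW]
          exact mγ₁y (mI2 (le_Ip _ _))
        have h6 : γ₁y (Ip ρ₂inv (Ip ρ₃inv (β₂ s 0 + d₂))) ≤ Gb s + cb := by
          have hs2 := split hρ₃s hρ₃r (β₂ s 0) d₂
          have : γ₁y (Ip ρ₂inv (Ip ρ₃inv (β₂ s 0 + d₂))) ≤
              max (γ₁y (Ip ρ₂inv (Ip ρ₃inv (Ip ρ₃ (β₂ s 0)))))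
                (γ₁y (Ip ρ₂inv (Ip ρ₃inv (Ip ρ₃inv d₂)))) := by
            rw [← Monotone.map_max mγ₁y, ← Monotone.map_max mI2, ← Monotone.map_max mI3]
            exact mγ₁y (mI2 (mI3 hs2))
          exact this.trans (max_le_add _ _)
        refine h4.trans (max_le (h5.trans le_self_add) ?_)
        exact h6.trans (le_add_self)
      have hRU : γ₁u U + W U ≤ R U := hγR U
      calc C1f X₁ U₁ + γ₁y (Ip ρ₂inv (C2f X₂ U₂))
          ≤ (γ₁u U + (β₁ s 0 + d₁)) + (W U + (Gb s + cb)) := add_le_add hC₁ hin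
        _ ≤ G₁ s + R U + c₁t := by
            rw [← NNReal.coe_le_coe, hG₁, hc₁t]; push_cast
            have h7 : (γ₁u U : ℝ) + W U ≤ R U := by exact_mod_cast hRU
            have := (Ga s).coe_nonneg; have := s_l.coe_nonneg; have := ca.coe_nonneg
            linarith
  -- continuity / zero facts for inverses
  have hρ₃invc : Continuous ρ₃inv := inv_continuous hρ₃s hρ₃l hρ₃r
  have hρ₁invc : Continuous ρ₁inv := inv_continuous hρ₁s hρ₁l hρ₁r
  have hρ₂invc : Continuous ρ₂inv := inv_continuous hρ₂s hρ₂l hρ₂r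
  have hρ₁inv0 : ρ₁inv 0 = 0 := inv_zero hρ₁s hρ₁0 hρ₁r
  have hρ₂inv0 : ρ₂inv 0 = 0 := inv_zero hρ₂s hρ₂0 hρ₂r
  have hρ₃inv0 : ρ₃inv 0 = 0 := inv_zero hρ₃s hρ₃0 hρ₃r
  have sI1 : StrictMono (Ip ρ₁inv) := Ip_strictMono (inv_strictMono hρ₁s hρ₁r)
  have sI2 : StrictMono (Ip ρ₂inv) := Ip_strictMono (inv_strictMono hρ₂s hρ₂r)
  have sI3 : StrictMono (Ip ρ₃inv) := Ip_strictMono (inv_strictMono hρ₃s hρ₃r)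
  have sq : StrictMono (Ip ρ₃) := Ip_strictMono hρ₃s
  have hG₁K : ClassK G₁ := by
    refine ⟨?_, ?_, ?_⟩
    · rw [hG₁]
      have c1 : Continuous fun σ => β₁ σ 0 := (hβ₁.1 0).1
      have c2 : Continuous fun σ => β₂ σ 0 := (hβ₂.1 0).1
      refine Continuous.add (Continuous.add ?_ c1) ?_
      · exact (Ip_continuous hρ₁invc).comp ((Ip_continuous hρ₃invc).comp
          ((Ip_continuous hρ₃c).comp c1))
      · exact hγ₁y.1.comp ((Ip_continuous hρ₂invc).comp ((Ip_continuous hρ₃invc).comp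
          ((Ip_continuous hρ₃c).comp c2)))
    · intro x y hxy
      have hb1 : β₁ x 0 < β₁ y 0 := (hβ₁.1 0).2.1 hxy
      have hb2 : β₂ x 0 < β₂ y 0 := (hβ₂.1 0).2.1 hxy
      exact add_lt_add (add_lt_add (sI1 (sI3 (sq hb1))) hb1) (hγ₁y.2.1 (sI2 (sI3 (sq hb2))))
    · have z1 : β₁ 0 0 = 0 := (hβ₁.1 0).2.2
      have z2 : β₂ 0 0 = 0 := (hβ₂.1 0).2.2
      rw [hG₁, hGa, hGb]
      simp only [z1, z2, Ip_zero hρ₃0, Ip_zero hρ₃inv0, Ip_zero hρ₁inv0, Ip_zero hρ₂inv0,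
        hγ₁y.2.2, add_zero, zero_add]
  have hczero : s_l = 0 → d₁ = 0 → d₂ = 0 → c₁ = 0 := by
    intro h0 h1 h2
    rw [hc₁, hc₁t, hca, hcb, hFc, hE₂, h0, h1, h2]
    simp [Ip_zero hρ₃0, Ip_zero hρ₃inv0, Ip_zero hρ₁inv0, Ip_zero hρ₂inv0, hγ₁y.2.2]
  refine ⟨G₁, c₁, hG₁K, hczero, ?_, ?_⟩
  · -- transient
    intro x₁ x₂ y₁ y₂ X₁ X₂ U₁ U₂ hV t
    show y₁ t ≤ G₁ (X₁ + X₂) + R (U₁ + U₂) + c₁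
    refine ((boundy _ _ _ _ _ _ _ _ hV t).1).trans ?_
    refine (hM1le X₁ U₁ X₂ U₂ (X₁ + X₂) (U₁ + U₂) le_self_add le_add_self le_self_add
      le_add_self).trans ?_
    refine add_le_add le_rfl ?_
    rw [hc₁]
    exact le_self_add
  · -- tail
    intro s ε hε
    obtain ⟨Ustar, hUstar⟩ := classKInf_surjective hr₃1 (G₁ s)
    set M1c : ℝ≥0 := M1f s Ustar s Ustar with hM1c
    set M2c : ℝ≥0 := M2f s Ustar s Ustar with hM2c
    set N1c : ℝ≥0 := α₁0 (s + (Ustar + M1c + M2c)) + D₁0 with hN1c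
    set N2c : ℝ≥0 := α₂0 (s + (Ustar + M1c + M2c)) + D₂0 with hN2c
    have hFcont : ContinuousAt Fc 0 := by
      have hcont : Continuous Fc := by
        rw [hFc]
        refine Continuous.add ((Ip_continuous hρ₃invc).comp ?_)
          ((Ip_continuous hρ₁invc).comp ((Ip_continuous hρ₃c).comp
            ((Ip_continuous hρ₃invc).comp (continuous_const.add continuous_id))))
        refine (continuous_const.add continuous_id).add ?_
        rw [hE₂]
        exact hγ₁y.1.comp ((Ip_continuous hρ₂invc).comp ((Ip_continuous hρ₃invc).comp
          (continuous_const.add continuous_id)))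
      exact hcont.continuousAt
    have hev : ∀ᶠ x in nhdsWithin (0:ℝ≥0) (Set.Ioi 0), Fc x < Fc 0 + ε :=
      (hFcont.eventually (gt_mem_nhds (lt_add_of_pos_right (Fc 0) hε))).filter_mono
        nhdsWithin_le_nhds
    obtain ⟨ε', hε'lt, hε'mem⟩ := (hev.and self_mem_nhdsWithin).exists
    have hε'pos : (0:ℝ≥0) < ε' := hε'mem
    have hε'le : Fc ε' ≤ Fc 0 + ε := hε'lt.le
    obtain ⟨τ, hτ₁, hτ₂⟩ := (((hβ₁.2 N1c).2.eventually (gt_mem_nhds hε'pos)).and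
      ((hβ₂.2 N2c).2.eventually (gt_mem_nhds hε'pos))).exists
    have hρ₃ε : (0:ℝ≥0) < ρ₃ ε' := by
      rw [← hρ₃0]
      exact hρ₃s hε'pos
    obtain ⟨N, hN'⟩ := exists_nat_gt (M1c / ρ₃ ε')
    have hN : M1c < (N : ℝ≥0) * ρ₃ ε' := by
      rwa [div_lt_iff₀ hρ₃ε] at hN'
    refine ⟨2 * τ * (N : ℝ≥0), ?_⟩
    intro x₁ x₂ y₁ y₂ X₁ X₂ U₁ U₂ hV hXs t ht
    show y₁ t ≤ R (U₁ + U₂) + r₃1 (U₁ + U₂) + c₁ + ε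
    have hX₁s : X₁ ≤ s := le_trans le_self_add hXs
    have hX₂s : X₂ ≤ s := le_trans le_add_self hXs
    rcases le_total (U₁ + U₂) Ustar with hU | hU
    · -- small inputs: run the iteration
      have hU₁ : U₁ ≤ Ustar := le_trans le_self_add hU
      have hU₂ : U₂ ≤ Ustar := le_trans le_add_self hU
      have hC1m : C1f X₁ U₁ ≤ C1f s Ustar := by
        rw [hC1f]
        exact add_le_add (add_le_add (ClassK.mono (hβ₁.1 0) hX₁s) (mγ₁u hU₁)) le_rfl
      have hC2m : C2f X₂ U₂ ≤ C2f s Ustar := by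
        rw [hC2f]
        exact add_le_add (add_le_add (ClassK.mono (hβ₂.1 0) hX₂s) (mγ₂u hU₂)) le_rfl
      have hMcap1 : M1f X₁ U₁ X₂ U₂ ≤ M1c := by
        rw [hM1c, hM1f]
        exact max_le_max le_rfl (max_le_max (mI1 hC1m) (add_le_add hC1m (mγ₁y (mI2 hC2m))))
      have hMcap2 : M2f X₁ U₁ X₂ U₂ ≤ M2c := by
        rw [hM2c, hM2f]
        exact max_le_max le_rfl (max_le_max (mI2 hC2m) (add_le_add hC2m (mγ₂y (mI1 hC1m))))
      have hy1M : ∀ t', y₁ t' ≤ M1c :=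
        fun t' => ((boundy _ _ _ _ _ _ _ _ hV t').1).trans hMcap1
      have hy2M : ∀ t', y₂ t' ≤ M2c :=
        fun t' => ((boundy _ _ _ _ _ _ _ _ hV t').2).trans hMcap2
      have hx1N : ∀ t', x₁ t' ≤ N1c := by
        intro t'
        refine (hV.2.2.2.1 t').trans ?_
        rw [hN1c]
        refine add_le_add (mα₁0 (add_le_add hX₁s ?_)) le_rfl
        refine csSup_le ⟨U₁ + y₁ 0 + y₂ 0, Set.mem_image_of_mem _ ⟨le_rfl, zero_le⟩⟩ ?_
        rintro v ⟨σ, _, rfl⟩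
        exact add_le_add (add_le_add hU₁ (hy1M σ)) (hy2M σ)
      have hx2N : ∀ t', x₂ t' ≤ N2c := by
        intro t'
        refine (hV.2.2.2.2.1 t').trans ?_
        rw [hN2c]
        refine add_le_add (mα₂0 (add_le_add hX₂s ?_)) le_rfl
        refine csSup_le ⟨U₂ + y₁ 0 + y₂ 0, Set.mem_image_of_mem _ ⟨le_rfl, zero_le⟩⟩ ?_
        rintro v ⟨σ, _, rfl⟩
        exact add_le_add (add_le_add hU₂ (hy1M σ)) (hy2M σ)
      set u₁e : ℝ≥0 := γ₁u U₁ + d₁ + ε' with hu₁e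
      set u₂e : ℝ≥0 := γ₂u U₂ + d₂ + ε' with hu₂e
      set a : ℕ → ℝ≥0 := fun n => Nat.rec M1c (fun _ an => γ₁y (γ₂y an + u₂e) + u₁e) n
        with ha
      have ha0 : a 0 = M1c := rfl
      have haS : ∀ n, a (n+1) = γ₁y (γ₂y (a n) + u₂e) + u₁e := fun _ => rfl
      have hIO1 := hV.2.1
      have hIO2 := hV.2.2.1
      have hP : ∀ n : ℕ, ∀ t', 2 * τ * (n : ℝ≥0) ≤ t' → y₁ t' ≤ a n := by
        intro n
        induction n with
        | zero => intro t' _; exact (hy1M t').trans_eq ha0.symm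
        | succ n ih =>
          intro t' ht'
          have hcast : ((n+1 : ℕ) : ℝ≥0) = (n : ℝ≥0) + 1 := by push_cast; ring
          rw [hcast] at ht'
          have hT₀ : 2 * τ * (n : ℝ≥0) + τ + τ ≤ t' := by
            calc 2 * τ * (n : ℝ≥0) + τ + τ = 2 * τ * ((n : ℝ≥0) + 1) := by ring
              _ ≤ t' := ht'
          have hy2' : ∀ t'', 2 * τ * (n : ℝ≥0) + τ ≤ t'' → y₂ t'' ≤ γ₂y (a n) + u₂e := by
            intro t'' ht''
            have hle : 2 * τ * (n : ℝ≥0) ≤ t'' := le_trans le_self_add ht''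
            have hβb : β₂ (x₂ (2 * τ * (n : ℝ≥0))) (t'' - 2 * τ * (n : ℝ≥0)) ≤ ε' := by
              calc β₂ (x₂ (2 * τ * (n : ℝ≥0))) (t'' - 2 * τ * (n : ℝ≥0))
                  ≤ β₂ N2c (t'' - 2 * τ * (n : ℝ≥0)) := ClassK.mono (hβ₂.1 _) (hx2N _)
                _ ≤ β₂ N2c τ := (hβ₂.2 N2c).1 (le_tsub_of_add_le_left ht'')
                _ ≤ ε' := hτ₂.le
            have hsup : sSup (y₁ '' Set.Icc (2 * τ * (n : ℝ≥0)) t'') ≤ a n := by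
              refine csSup_le ⟨y₁ (2 * τ * (n : ℝ≥0)),
                Set.mem_image_of_mem _ ⟨le_rfl, hle⟩⟩ ?_
              rintro v ⟨σ, hσ, rfl⟩
              exact ih σ hσ.1
            calc y₂ t'' ≤ β₂ (x₂ (2 * τ * (n : ℝ≥0))) (t'' - 2 * τ * (n : ℝ≥0)) +
                  γ₂y (sSup (y₁ '' Set.Icc (2 * τ * (n : ℝ≥0)) t'')) + γ₂u U₂ + d₂ :=
                hIO2 _ t'' hle
              _ ≤ ε' + γ₂y (a n) + γ₂u U₂ + d₂ :=
                add_le_add (add_le_add (add_le_add hβb (mγ₂y hsup)) le_rfl) le_rfl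
              _ = γ₂y (a n) + u₂e := by rw [hu₂e]; ring
          have hle1 : 2 * τ * (n : ℝ≥0) + τ ≤ t' := le_trans le_self_add hT₀
          have hβb : β₁ (x₁ (2 * τ * (n : ℝ≥0) + τ)) (t' - (2 * τ * (n : ℝ≥0) + τ)) ≤ ε' := by
            calc β₁ (x₁ (2 * τ * (n : ℝ≥0) + τ)) (t' - (2 * τ * (n : ℝ≥0) + τ))
                ≤ β₁ N1c (t' - (2 * τ * (n : ℝ≥0) + τ)) := ClassK.mono (hβ₁.1 _) (hx1N _)
              _ ≤ β₁ N1c τ := (hβ₁.2 N1c).1 (le_tsub_of_add_le_left hT₀)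
              _ ≤ ε' := hτ₁.le
          have hsup : sSup (y₂ '' Set.Icc (2 * τ * (n : ℝ≥0) + τ) t') ≤ γ₂y (a n) + u₂e := by
            refine csSup_le ⟨y₂ (2 * τ * (n : ℝ≥0) + τ),
              Set.mem_image_of_mem _ ⟨le_rfl, hle1⟩⟩ ?_
            rintro v ⟨σ, hσ, rfl⟩
            exact hy2' σ hσ.1
          calc y₁ t' ≤ β₁ (x₁ (2 * τ * (n : ℝ≥0) + τ)) (t' - (2 * τ * (n : ℝ≥0) + τ)) +
                γ₁y (sSup (y₂ '' Set.Icc (2 * τ * (n : ℝ≥0) + τ) t')) + γ₁u U₁ + d₁ :=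
              hIO1 _ t' hle1
            _ ≤ ε' + γ₁y (γ₂y (a n) + u₂e) + γ₁u U₁ + d₁ :=
              add_le_add (add_le_add (add_le_add hβb (mγ₁y hsup)) le_rfl) le_rfl
            _ = a (n+1) := by rw [haS n, hu₁e]; ring
      set Λa : ℝ≥0 := u₁e + γ₁y (Ip ρ₂inv u₂e) with hΛa
      set Λb : ℝ≥0 := Ip ρ₁inv (Ip ρ₃ u₁e) with hΛb
      set Θ : ℝ≥0 := max s_l (max Λa Λb) with hΘ
      have hdich : ∀ n, Θ < a n → a (n+1) ≤ Θ ∨ a (n+1) + ρ₃ ε' ≤ a n := by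
        intro n hn
        have hsl : s_l ≤ a n := le_trans (by rw [hΘ]; exact le_max_left _ _) hn.le
        have h1 : a (n+1) ≤ max (γ₁y (Ip ρ₂ (γ₂y (a n))) + u₁e)
            (γ₁y (Ip ρ₂inv u₂e) + u₁e) := by
          rw [haS n]
          have hs2 : γ₂y (a n) + u₂e ≤ max (Ip ρ₂ (γ₂y (a n))) (Ip ρ₂inv u₂e) :=
            split hρ₂s hρ₂r _ _
          calc γ₁y (γ₂y (a n) + u₂e) + u₁e
              ≤ γ₁y (max (Ip ρ₂ (γ₂y (a n))) (Ip ρ₂inv u₂e)) + u₁e :=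
                add_le_add (mγ₁y hs2) le_rfl
            _ = max (γ₁y (Ip ρ₂ (γ₂y (a n)))) (γ₁y (Ip ρ₂inv u₂e)) + u₁e := by
                rw [Monotone.map_max mγ₁y]
            _ = _ := (max_add_add_right _ _ _).symm
        rcases le_max_iff.1 h1 with h2 | h2
        · have hIpv : γ₁y (Ip ρ₂ (γ₂y (a n))) + ρ₁ (γ₁y (Ip ρ₂ (γ₂y (a n)))) ≤ a n :=
            hsg₂ (a n) hsl
          rcases le_total (ρ₁ (γ₁y (Ip ρ₂ (γ₂y (a n))))) (Ip ρ₃ u₁e) with h3 | h3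
          · left
            have hv2 : γ₁y (Ip ρ₂ (γ₂y (a n))) ≤ ρ₁inv (Ip ρ₃ u₁e) := by
              have h4 := mρ₁inv h3
              rwa [hρ₁l _] at h4
            refine le_trans h2 ?_
            calc γ₁y (Ip ρ₂ (γ₂y (a n))) + u₁e
                ≤ ρ₁inv (Ip ρ₃ u₁e) + Ip ρ₃ u₁e := add_le_add hv2 (le_Ip _ _)
              _ = Ip ρ₁inv (Ip ρ₃ u₁e) := add_comm _ _
              _ ≤ Θ := by rw [hΘ, hΛb]; exact le_max_of_le_right (le_max_right _ _)
          · right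
            have hρ₃ee : ρ₃ ε' ≤ ρ₃ u₁e :=
              hρ₃s.monotone (by rw [hu₁e]; exact le_add_self)
            calc a (n+1) + ρ₃ ε' ≤ (γ₁y (Ip ρ₂ (γ₂y (a n))) + u₁e) + ρ₃ u₁e :=
                add_le_add h2 hρ₃ee
              _ = γ₁y (Ip ρ₂ (γ₂y (a n))) + Ip ρ₃ u₁e := by
                  show _ = γ₁y (Ip ρ₂ (γ₂y (a n))) + (u₁e + ρ₃ u₁e)
                  ring
              _ ≤ γ₁y (Ip ρ₂ (γ₂y (a n))) + ρ₁ (γ₁y (Ip ρ₂ (γ₂y (a n)))) :=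
                add_le_add le_rfl h3
              _ ≤ a n := hIpv
        · left
          refine le_trans h2 ?_
          rw [hΘ, hΛa, add_comm u₁e]
          exact le_max_of_le_right (le_max_left _ _)
      have hfind : ∃ n, n ≤ N ∧ a n ≤ Θ := by
        by_contra hcon
        push_neg at hcon
        have hdec : ∀ n, n < N → a (n+1) + ρ₃ ε' ≤ a n := by
          intro n hn
          rcases hdich n (hcon n hn.le) with h | h
          · exact absurd h (not_le.2 (hcon (n+1) hn))
          · exact h
        have hsum : ∀ n, n ≤ N → a n + (n : ℝ≥0) * ρ₃ ε' ≤ a 0 := by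
          intro n hn
          induction n with
          | zero => simp
          | succ k ih =>
            have hk : k ≤ N := Nat.le_of_succ_le hn
            have h5 := hdec k (Nat.lt_of_succ_le hn)
            have hcast : ((k+1 : ℕ) : ℝ≥0) = (k : ℝ≥0) + 1 := by push_cast; ring
            calc a (k+1) + ((k+1 : ℕ) : ℝ≥0) * ρ₃ ε'
                = (a (k+1) + ρ₃ ε') + (k : ℝ≥0) * ρ₃ ε' := by rw [hcast]; ring
              _ ≤ a k + (k : ℝ≥0) * ρ₃ ε' := add_le_add h5 le_rfl
              _ ≤ a 0 := ih hk
        have h6 := hsum N le_rfl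
        have h7 : (N : ℝ≥0) * ρ₃ ε' ≤ a 0 := le_trans le_add_self h6
        rw [ha0] at h7
        exact absurd hN (not_lt.2 h7)
      obtain ⟨n, hnN, hΘn⟩ := hfind
      have hyt : y₁ t ≤ Θ := by
        refine le_trans (hP n t (le_trans ?_ ht)) hΘn
        have hc : (n : ℝ≥0) ≤ (N : ℝ≥0) := by exact_mod_cast hnN
        exact mul_le_mul_right hc _
      have hq2R : ∀ x, x ≤ γ₁u (U₁+U₂) + W (U₁+U₂) → Ip ρ₃ x ≤ R (U₁+U₂) := by
        intro x hx
        calc Ip ρ₃ x ≤ Ip ρ₃ (γ₁u (U₁+U₂) + W (U₁+U₂)) := mq hx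
          _ ≤ Ip ρ₃ (Ip ρ₃ (γ₁u (U₁+U₂) + W (U₁+U₂))) := le_Ip _ _
          _ ≤ R (U₁+U₂) := le_Ip _ _
      have hΘle : Θ ≤ R (U₁+U₂) + c₁ + ε := by
        rw [hΘ]
        refine max_le ?_ (max_le ?_ ?_)
        · rw [← NNReal.coe_le_coe, hc₁, hc₁t]; push_cast
          have := (R (U₁+U₂)).coe_nonneg
          have := ca.coe_nonneg
          have := d₁.coe_nonneg
          have := cb.coe_nonneg
          have := (Fc 0).coe_nonneg
          have := ε.coe_nonneg
          linarith
        · have hin : γ₁y (Ip ρ₂inv u₂e) ≤ W (U₁+U₂) + E₂ ε' := by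
            have hu₂e' : u₂e ≤ γ₂u (U₁+U₂) + (d₂ + ε') := by
              rw [hu₂e]
              calc γ₂u U₂ + d₂ + ε' = γ₂u U₂ + (d₂ + ε') := by ring
                _ ≤ γ₂u (U₁+U₂) + (d₂ + ε') := add_le_add (mγ₂u le_add_self) le_rfl
            have hs9 := split hρ₃s hρ₃r (γ₂u (U₁+U₂)) (d₂ + ε')
            have h8 : γ₁y (Ip ρ₂inv u₂e) ≤ max (γ₁y (Ip ρ₂inv (Ip ρ₃ (γ₂u (U₁+U₂)))))
                (γ₁y (Ip ρ₂inv (Ip ρ₃inv (d₂ + ε')))) := by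
              rw [← Monotone.map_max mγ₁y, ← Monotone.map_max mI2]
              exact mγ₁y (mI2 (hu₂e'.trans hs9))
            refine h8.trans (max_le ?_ ?_)
            · refine le_trans ?_ le_self_add
              rw [hW]
              exact mγ₁y (mI2 (le_Ip _ _))
            · rw [hE₂]
              exact le_add_self
          have h7 : Λa ≤ (γ₁u (U₁+U₂) + W (U₁+U₂)) + (d₁ + ε' + E₂ ε') := by
            rw [hΛa, hu₁e]
            calc γ₁u U₁ + d₁ + ε' + γ₁y (Ip ρ₂inv u₂e)
                ≤ γ₁u (U₁+U₂) + d₁ + ε' + (W (U₁+U₂) + E₂ ε') :=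
                add_le_add (add_le_add (add_le_add (mγ₁u le_self_add) le_rfl) le_rfl) hin
              _ = _ := by ring
          refine (h7.trans (split hρ₃s hρ₃r _ _)).trans (max_le ?_ ?_)
          · refine (hq2R _ le_rfl).trans ?_
            rw [← NNReal.coe_le_coe]; push_cast
            have := c₁.coe_nonneg
            have := ε.coe_nonneg
            linarith
          · have h8 : Ip ρ₃inv (d₁ + ε' + E₂ ε') ≤ Fc ε' := by rw [hFc]; exact le_self_add
            refine (h8.trans hε'le).trans ?_
            rw [← NNReal.coe_le_coe, hc₁]; push_cast
            have := (R (U₁+U₂)).coe_nonneg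
            have := c₁t.coe_nonneg
            linarith
        · have hu₁e' : u₁e ≤ γ₁u (U₁+U₂) + (d₁ + ε') := by
            rw [hu₁e]
            calc γ₁u U₁ + d₁ + ε' = γ₁u U₁ + (d₁ + ε') := by ring
              _ ≤ γ₁u (U₁+U₂) + (d₁ + ε') := add_le_add (mγ₁u le_self_add) le_rfl
          have h9 : Λb ≤ max (Ip ρ₁inv (Ip ρ₃ (Ip ρ₃ (γ₁u (U₁+U₂)))))
              (Ip ρ₁inv (Ip ρ₃ (Ip ρ₃inv (d₁ + ε')))) := by
            rw [hΛb, ← Monotone.map_max mI1, ← Monotone.map_max mq]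
            exact mI1 (mq (hu₁e'.trans (split hρ₃s hρ₃r _ _)))
          refine h9.trans (max_le ?_ ?_)
          · have h10 : Ip ρ₁inv (Ip ρ₃ (Ip ρ₃ (γ₁u (U₁+U₂)))) ≤ R (U₁+U₂) :=
              mI1 (mq (mq le_self_add))
            refine h10.trans ?_
            rw [← NNReal.coe_le_coe]; push_cast
            have := c₁.coe_nonneg
            have := ε.coe_nonneg
            linarith
          · have h10 : Ip ρ₁inv (Ip ρ₃ (Ip ρ₃inv (d₁ + ε'))) ≤ Fc ε' := by
              rw [hFc]; exact le_add_self
            refine (h10.trans hε'le).trans ?_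
            rw [← NNReal.coe_le_coe, hc₁]; push_cast
            have := (R (U₁+U₂)).coe_nonneg
            have := c₁t.coe_nonneg
            linarith
      refine hyt.trans (hΘle.trans ?_)
      rw [← NNReal.coe_le_coe]; push_cast
      have := (r₃1 (U₁+U₂)).coe_nonneg
      linarith
    · -- big inputs
      have h1 : y₁ t ≤ G₁ s + R (U₁ + U₂) + c₁t :=
        ((boundy _ _ _ _ _ _ _ _ hV t).1).trans
          (hM1le X₁ U₁ X₂ U₂ s (U₁ + U₂) hX₁s hX₂s le_self_add le_add_self)
      have h2 : G₁ s ≤ r₃1 (U₁ + U₂) := by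
        rw [← hUstar]
        exact hr₃1.1.2.1.monotone hU
      refine h1.trans ?_
      rw [← NNReal.coe_le_coe, hc₁]; push_cast
      have h2' : (G₁ s : ℝ) ≤ r₃1 (U₁ + U₂) := by exact_mod_cast h2
      have := (Fc 0).coe_nonneg
      have := ε.coe_nonneg
      linarith

lemma assemble
    (β₁ β₂ : ℝ≥0 → ℝ≥0 → ℝ≥0)
    (γ₁y γ₂y γ₁u γ₂u α₁0 α₂0 ρ₁inv ρ₂inv ρ₃ r₃1 : ℝ≥0 → ℝ≥0)
    (d₁ d₂ D₁0 D₂0 : ℝ≥0)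
    (G₁ : ℝ≥0 → ℝ≥0) (c₁ : ℝ≥0) (hG₁K : ClassK G₁)
    (htrans : ∀ x₁ x₂ y₁ y₂ : ℝ≥0 → ℝ≥0, ∀ X₁ X₂ U₁ U₂ : ℝ≥0,
      Valid β₁ β₂ γ₁y γ₂y γ₁u γ₂u α₁0 α₂0 d₁ d₂ D₁0 D₂0 x₁ x₂ y₁ y₂ X₁ X₂ U₁ U₂ →
      ∀ t, y₁ t ≤ G₁ (X₁ + X₂) + Ip ρ₁inv (Ip ρ₃ (Ip ρ₃ (γ₁u (U₁+U₂) +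
        γ₁y (Ip ρ₂inv (Ip ρ₃ (Ip ρ₃ (γ₂u (U₁+U₂)))))))) + c₁)
    (htail : ∀ s ε : ℝ≥0, 0 < ε → ∃ T : ℝ≥0, ∀ x₁ x₂ y₁ y₂ : ℝ≥0 → ℝ≥0, ∀ X₁ X₂ U₁ U₂ : ℝ≥0,
      Valid β₁ β₂ γ₁y γ₂y γ₁u γ₂u α₁0 α₂0 d₁ d₂ D₁0 D₂0 x₁ x₂ y₁ y₂ X₁ X₂ U₁ U₂ →
      X₁ + X₂ ≤ s → ∀ t, T ≤ t →
      y₁ t ≤ Ip ρ₁inv (Ip ρ₃ (Ip ρ₃ (γ₁u (U₁+U₂) +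
        γ₁y (Ip ρ₂inv (Ip ρ₃ (Ip ρ₃ (γ₂u (U₁+U₂)))))))) + r₃1 (U₁+U₂) + c₁ + ε) :
    ∃ β' : ℝ≥0 → ℝ≥0 → ℝ≥0, ClassKL β' ∧
      ∀ x₁ x₂ y₁ y₂ : ℝ≥0 → ℝ≥0, ∀ X₁ X₂ U₁ U₂ : ℝ≥0,
      Valid β₁ β₂ γ₁y γ₂y γ₁u γ₂u α₁0 α₂0 d₁ d₂ D₁0 D₂0 x₁ x₂ y₁ y₂ X₁ X₂ U₁ U₂ →
      ∀ t, y₁ t ≤ β' (X₁ + X₂) t + (Ip ρ₁inv (Ip ρ₃ (Ip ρ₃ (γ₁u (U₁+U₂) +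
        γ₁y (Ip ρ₂inv (Ip ρ₃ (Ip ρ₃ (γ₂u (U₁+U₂)))))))) + r₃1 (U₁+U₂)) + c₁ := by
  classical
  set R : ℝ≥0 → ℝ≥0 := fun U => Ip ρ₁inv (Ip ρ₃ (Ip ρ₃ (γ₁u U +
    γ₁y (Ip ρ₂inv (Ip ρ₃ (Ip ρ₃ (γ₂u U))))))) with hRdef
  set Ex : ℝ≥0 → ℝ≥0 → Set ℝ≥0 := fun s t =>
    {v | ∃ x₁ x₂ y₁ y₂ : ℝ≥0 → ℝ≥0, ∃ X₁ X₂ U₁ U₂ t' : ℝ≥0,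
      Valid β₁ β₂ γ₁y γ₂y γ₁u γ₂u α₁0 α₂0 d₁ d₂ D₁0 D₂0 x₁ x₂ y₁ y₂ X₁ X₂ U₁ U₂ ∧
      X₁ + X₂ ≤ s ∧ t ≤ t' ∧
      v = y₁ t' - (R (U₁+U₂) + r₃1 (U₁+U₂) + c₁)} with hEx
  have hne : ∀ s t, (Ex s t).Nonempty := by
    intro s t
    refine ⟨0, (fun _ => 0), (fun _ => 0), (fun _ => 0), (fun _ => 0), 0, 0, 0, 0, t,
      valid_zero _ _ _ _ _ _ _ _ _ _ _ _, by simp, le_rfl, by simp [zero_tsub]⟩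
  have hub : ∀ s t, ∀ v ∈ Ex s t, v ≤ G₁ s := by
    intro s t v hv
    obtain ⟨x₁, x₂, y₁, y₂, X₁, X₂, U₁, U₂, t', hV, hXs, _, rfl⟩ := hv
    rw [tsub_le_iff_right]
    refine (htrans _ _ _ _ _ _ _ _ hV t').trans ?_
    have hG : G₁ (X₁ + X₂) ≤ G₁ s := hG₁K.2.1.monotone hXs
    rw [← NNReal.coe_le_coe]; push_cast
    have hG' : (G₁ (X₁ + X₂) : ℝ) ≤ G₁ s := by exact_mod_cast hG
    have := (r₃1 (U₁+U₂)).coe_nonneg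
    linarith
  have hbdd : ∀ s t, BddAbove (Ex s t) := fun s t => ⟨G₁ s, hub s t⟩
  set Φ : ℝ≥0 → ℝ≥0 → ℝ≥0 := fun s t => sSup (Ex s t) with hΦ
  have hΦle : ∀ s t, Φ s t ≤ G₁ s := fun s t => csSup_le (hne s t) (hub s t)
  have hΦmono : ∀ t, Monotone (fun s => Φ s t) := by
    intro t s s' hss'
    refine csSup_le_csSup (hbdd s' t) (hne s t) ?_
    rintro v ⟨x₁, x₂, y₁, y₂, X₁, X₂, U₁, U₂, t', hV, hXs, htt', rfl⟩
    exact ⟨x₁, x₂, y₁, y₂, X₁, X₂, U₁, U₂, t', hV, hXs.trans hss', htt', rfl⟩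
  have hΦanti : ∀ s, Antitone (Φ s) := by
    intro s t t' htt'
    refine csSup_le_csSup (hbdd s t) (hne s t') ?_
    rintro v ⟨x₁, x₂, y₁, y₂, X₁, X₂, U₁, U₂, t'', hV, hXs, ht'le, rfl⟩
    exact ⟨x₁, x₂, y₁, y₂, X₁, X₂, U₁, U₂, t'', hV, hXs, htt'.trans ht'le, rfl⟩
  have hΦdecay : ∀ s, Filter.Tendsto (Φ s) Filter.atTop (nhds 0) := by
    intro s
    rw [tendsto_order]
    refine ⟨fun a ha => absurd ha (by simp), fun a ha => ?_⟩
    have ha2 : (0:ℝ≥0) < a / 2 := by positivity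
    obtain ⟨T, hT⟩ := htail s (a / 2) ha2
    filter_upwards [Filter.eventually_ge_atTop T] with t hTt
    have hle : Φ s t ≤ a / 2 := by
      refine csSup_le (hne s t) ?_
      rintro v ⟨x₁, x₂, y₁, y₂, X₁, X₂, U₁, U₂, t', hV, hXs, htt', rfl⟩
      rw [tsub_le_iff_right]
      have := hT x₁ x₂ y₁ y₂ X₁ X₂ U₁ U₂ hV hXs t' (hTt.trans htt')
      rw [← NNReal.coe_le_coe]; push_cast
      rw [← NNReal.coe_le_coe] at this; push_cast at this
      linarith
    exact lt_of_le_of_lt hle (NNReal.half_lt_self ha.ne')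
  obtain ⟨β', hKL, hmaj⟩ := kl_major Φ G₁ hG₁K hΦmono hΦanti hΦle hΦdecay
  refine ⟨β', hKL, ?_⟩
  intro x₁ x₂ y₁ y₂ X₁ X₂ U₁ U₂ hV t
  have hmem : y₁ t - (R (U₁+U₂) + r₃1 (U₁+U₂) + c₁) ∈ Ex (X₁+X₂) t :=
    ⟨x₁, x₂, y₁, y₂, X₁, X₂, U₁, U₂, t, hV, le_rfl, le_rfl, rfl⟩
  have h7 : y₁ t - (R (U₁+U₂) + r₃1 (U₁+U₂) + c₁) ≤ β' (X₁+X₂) t :=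
    (le_csSup (hbdd _ _) hmem).trans (hmaj (X₁+X₂) t)
  rw [tsub_le_iff_right] at h7
  show y₁ t ≤ β' (X₁ + X₂) t + (R (U₁+U₂) + r₃1 (U₁+U₂)) + c₁
  refine h7.trans_eq ?_
  ring

end SmallGainAux

/-- Generalized small-gain theorem with individual gains (signal form).
`ρᵢinv` denotes the inverse bijection of `ρᵢ`; the gains in the conclusion are
`r₁(s) = (Id+ρ₁⁻¹)((Id+ρ₃)²(γ₁ᵘ(s) + γ₁ʸ((Id+ρ₂⁻¹)((Id+ρ₃)²(γ₂ᵘ(s))))))` and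
`r₂(s) = (Id+ρ₂⁻¹)((Id+ρ₃)²(γ₂ᵘ(s) + γ₂ʸ((Id+ρ₁⁻¹)((Id+ρ₃)²(γ₁ᵘ(s))))))`,
written out in full. -/
theorem generalized_small_gain_signal_form
    (β₁ β₂ : ℝ≥0 → ℝ≥0 → ℝ≥0)
    (γ₁y γ₂y γ₁u γ₂u α₁0 α₂0 : ℝ≥0 → ℝ≥0)
    (ρ₁ ρ₂ ρ₁inv ρ₂inv : ℝ≥0 → ℝ≥0)
    (d₁ d₂ s_l D₁0 D₂0 : ℝ≥0)
    (hβ₁ : ClassKL β₁) (hβ₂ : ClassKL β₂)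
    (hγ₁y : ClassK γ₁y) (hγ₂y : ClassK γ₂y)
    (hγ₁u : ClassK γ₁u) (hγ₂u : ClassK γ₂u)
    (hα₁0 : ClassK α₁0) (hα₂0 : ClassK α₂0)
    (hρ₁ : ClassKInf ρ₁) (hρ₂ : ClassKInf ρ₂)
    (hρ₁invl : Function.LeftInverse ρ₁inv ρ₁)
    (hρ₁invr : Function.RightInverse ρ₁inv ρ₁)
    (hρ₂invl : Function.LeftInverse ρ₂inv ρ₂)
    (hρ₂invr : Function.RightInverse ρ₂inv ρ₂)
    (hsg₁ : ∀ s : ℝ≥0, s_l ≤ s → Ip ρ₂ (γ₂y (Ip ρ₁ (γ₁y s))) ≤ s)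
    (hsg₂ : ∀ s : ℝ≥0, s_l ≤ s → Ip ρ₁ (γ₁y (Ip ρ₂ (γ₂y s))) ≤ s) :
    ∀ ρ₃ r₃1 : ℝ≥0 → ℝ≥0, ClassKInf ρ₃ → ClassKInf r₃1 →
    ∃ β₁' β₂' : ℝ≥0 → ℝ≥0 → ℝ≥0, ∃ r₃2 : ℝ≥0 → ℝ≥0, ∃ d₁' d₂' : ℝ≥0,
      ClassKL β₁' ∧ ClassKL β₂' ∧ ClassK r₃2 ∧
      (s_l = 0 ∧ d₁ = 0 ∧ d₂ = 0 ∧ D₁0 = 0 ∧ D₂0 = 0 → d₁' = 0 ∧ d₂' = 0) ∧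
      ∀ (x₁ x₂ y₁ y₂ : ℝ≥0 → ℝ≥0) (X₁ X₂ U₁ U₂ : ℝ≥0),
        (∀ t : ℝ≥0, BddAbove (x₁ '' Set.Icc 0 t) ∧ BddAbove (x₂ '' Set.Icc 0 t) ∧
          BddAbove (y₁ '' Set.Icc 0 t) ∧ BddAbove (y₂ '' Set.Icc 0 t)) →
        (∀ t₀ t : ℝ≥0, t₀ ≤ t →
          y₁ t ≤ β₁ (x₁ t₀) (t - t₀) + γ₁y (sSup (y₂ '' Set.Icc t₀ t)) + γ₁u U₁ + d₁) →
        (∀ t₀ t : ℝ≥0, t₀ ≤ t →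
          y₂ t ≤ β₂ (x₂ t₀) (t - t₀) + γ₂y (sSup (y₁ '' Set.Icc t₀ t)) + γ₂u U₂ + d₂) →
        (∀ t : ℝ≥0,
          x₁ t ≤ α₁0 (X₁ + sSup ((fun s => U₁ + y₁ s + y₂ s) '' Set.Icc 0 t)) + D₁0) →
        (∀ t : ℝ≥0,
          x₂ t ≤ α₂0 (X₂ + sSup ((fun s => U₂ + y₁ s + y₂ s) '' Set.Icc 0 t)) + D₂0) →
        x₁ 0 ≤ X₁ → x₂ 0 ≤ X₂ →
        ∀ t : ℝ≥0,
          y₁ t ≤ β₁' (X₁ + X₂) t +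
              (Ip ρ₁inv (Ip ρ₃ (Ip ρ₃ (γ₁u (U₁ + U₂) +
                  γ₁y (Ip ρ₂inv (Ip ρ₃ (Ip ρ₃ (γ₂u (U₁ + U₂))))))))
                + r₃1 (U₁ + U₂)) + d₁' ∧
          y₂ t ≤ β₂' (X₁ + X₂) t +
              (Ip ρ₂inv (Ip ρ₃ (Ip ρ₃ (γ₂u (U₁ + U₂) +
                  γ₂y (Ip ρ₁inv (Ip ρ₃ (Ip ρ₃ (γ₁u (U₁ + U₂))))))))
                + r₃2 (U₁ + U₂)) + d₂' := by
  intro ρ₃ r₃1 hρ₃ hr₃1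
  classical
  have hρ₃surj : Function.Surjective ρ₃ := SmallGainAux.classKInf_surjective hρ₃
  set ρ₃inv := Function.surjInv hρ₃surj with hρ₃invdef
  have hρ₃r : Function.RightInverse ρ₃inv ρ₃ := Function.rightInverse_surjInv hρ₃surj
  have hρ₃l : Function.LeftInverse ρ₃inv ρ₃ :=
    Function.leftInverse_surjInv ⟨hρ₃.1.2.1.injective, hρ₃surj⟩
  obtain ⟨G₁, c₁, hG₁K, hc₁0, htrans₁, htail₁⟩ :=
    SmallGainAux.core β₁ β₂ γ₁y γ₂y γ₁u γ₂u α₁0 α₂0 ρ₁ ρ₂ ρ₁inv ρ₂inv ρ₃ ρ₃inv r₃1 d₁ d₂ s_l D₁0 D₂0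
      hβ₁ hβ₂ hγ₁y hγ₂y hγ₁u hγ₂u hα₁0 hα₂0 hρ₁ hρ₂ hρ₁invl hρ₁invr hρ₂invl hρ₂invr
      hρ₃ hρ₃l hρ₃r hr₃1 hsg₁ hsg₂
  obtain ⟨G₂, c₂, hG₂K, hc₂0, htrans₂, htail₂⟩ :=
    SmallGainAux.core β₂ β₁ γ₂y γ₁y γ₂u γ₁u α₂0 α₁0 ρ₂ ρ₁ ρ₂inv ρ₁inv ρ₃ ρ₃inv r₃1 d₂ d₁ s_l D₂0 D₁0
      hβ₂ hβ₁ hγ₂y hγ₁y hγ₂u hγ₁u hα₂0 hα₁0 hρ₂ hρ₁ hρ₂invl hρ₂invr hρ₁invl hρ₁invr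
      hρ₃ hρ₃l hρ₃r hr₃1 hsg₂ hsg₁
  obtain ⟨β₁', hKL₁, hbound₁⟩ := SmallGainAux.assemble β₁ β₂ γ₁y γ₂y γ₁u γ₂u α₁0 α₂0
    ρ₁inv ρ₂inv ρ₃ r₃1 d₁ d₂ D₁0 D₂0 G₁ c₁ hG₁K htrans₁ htail₁
  obtain ⟨β₂', hKL₂, hbound₂⟩ := SmallGainAux.assemble β₂ β₁ γ₂y γ₁y γ₂u γ₁u α₂0 α₁0
    ρ₂inv ρ₁inv ρ₃ r₃1 d₂ d₁ D₂0 D₁0 G₂ c₂ hG₂K htrans₂ htail₂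
  refine ⟨β₁', β₂', r₃1, c₁, c₂, hKL₁, hKL₂, hr₃1.1, ?_, ?_⟩
  · rintro ⟨h1, h2, h3, _, _⟩
    exact ⟨hc₁0 h1 h2 h3, hc₂0 h1 h3 h2⟩
  · intro x₁ x₂ y₁ y₂ X₁ X₂ U₁ U₂ hB h1 h2 h3 h4 h5 h6 t
    have hV : SmallGainAux.Valid β₁ β₂ γ₁y γ₂y γ₁u γ₂u α₁0 α₂0 d₁ d₂ D₁0 D₂0
        x₁ x₂ y₁ y₂ X₁ X₂ U₁ U₂ := ⟨hB, h1, h2, h3, h4, h5, h6⟩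
    constructor
    · exact hbound₁ x₁ x₂ y₁ y₂ X₁ X₂ U₁ U₂ hV t
    · have h8 := hbound₂ x₂ x₁ y₂ y₁ X₂ X₁ U₂ U₁ hV.symm t
      rw [add_comm U₂ U₁, add_comm X₂ X₁] at h8
      exact h8
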